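/- arXiv:2005.12760 — 6 statements merged into one kernel-verified Lean document; each statement's English description precedes it below -/
import Mathlib

section
/- Let f : M → M' be a homomorphism of modules with negation carrying surpassing relations. Then the relation S on M' defined by: b S b' if and only if b = b' or there exists c ∈ M with b'(-)b ≼ f(c), is an equivalence relation on M' (reflexive, symmetric, and transitive); moreover if b₁'(-)b₁ ≼ f(c) and b₂'(-)b₂ ≼ f(c'), then (b₁' + b₂')(-)( b₁ + b₂) ≼ f(c + c'). (S is the systemic congruence image of f.) -/
/-- A module with negation carrying a surpassing relation: an additive
commutative monoid with an additive monoid automorphism `neg` of order ≤ 2,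
and a preorder `le` (the surpassing relation ≼) satisfying 0 ≼ c°, and
compatibility with the negation and with addition. -/
structure NegModule (M : Type*) [AddCommMonoid M] where
  neg : M → M
  neg_add : ∀ a b : M, neg (a + b) = neg a + neg b
  neg_zero : neg 0 = 0
  neg_neg : ∀ a : M, neg (neg a) = a
  le : M → M → Prop
  le_refl : ∀ a : M, le a a
  le_trans : ∀ a b c : M, le a b → le b c → le a c
  zero_le_circ : ∀ c : M, le 0 (c + neg c)
  le_neg : ∀ a b : M, le a b → le (neg a) (neg b)
  le_add : ∀ a b a' b' : M, le a b → le a' b' → le (a + a') (b + b')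

/-- A ≼-morphism of modules with negation carrying surpassing relations. -/
def IsPrecMorphism {M N : Type*} [AddCommMonoid M] [AddCommMonoid N]
    (SM : NegModule M) (SN : NegModule N) (f : M → N) : Prop :=
  f 0 = 0 ∧ (∀ b : M, f (SM.neg b) = SN.neg (f b)) ∧
    (∀ b b' : M, SN.le (f (b + b')) (f b + f b')) ∧
    (∀ b b' : M, SM.le b b' → SN.le (f b) (f b'))

/-- A homomorphism of modules with negation carrying surpassing relations. -/
def IsNegHom {M N : Type*} [AddCommMonoid M] [AddCommMonoid N]
    (SM : NegModule M) (SN : NegModule N) (f : M → N) : Prop :=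
  f 0 = 0 ∧ (∀ b : M, f (SM.neg b) = SN.neg (f b)) ∧
    (∀ b b' : M, f (b + b') = f b + f b') ∧
    (∀ b b' : M, SM.le b b' → SN.le (f b) (f b'))

/-- The systemic congruence image of a homomorphism f : M → M' is an
equivalence relation on M', and it is additive. -/
theorem systemic_congruence_image_equivalence
    {M M' : Type*} [AddCommMonoid M] [AddCommMonoid M']
    (SM : NegModule M) (SM' : NegModule M') (f : M → M')
    (hf : IsNegHom SM SM' f) :
    Equivalence (fun b b' : M' =>
      b = b' ∨ ∃ c : M, SM'.le (b' + SM'.neg b) (f c)) ∧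
    (∀ (b₁ b₁' b₂ b₂' : M') (c c' : M),
      SM'.le (b₁' + SM'.neg b₁) (f c) → SM'.le (b₂' + SM'.neg b₂) (f c') →
      SM'.le ((b₁' + b₂') + SM'.neg (b₁ + b₂)) (f (c + c'))) := by

  obtain ⟨hf0, hfneg, hfadd, hfmono⟩ := hf
  have key : ∀ (b₁ b₁' b₂ b₂' : M') (c c' : M),
      SM'.le (b₁' + SM'.neg b₁) (f c) → SM'.le (b₂' + SM'.neg b₂) (f c') →
      SM'.le ((b₁' + b₂') + SM'.neg (b₁ + b₂)) (f (c + c')) := by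
    intro b₁ b₁' b₂ b₂' c c' h1 h2
    have := SM'.le_add _ _ _ _ h1 h2
    rw [← hfadd] at this
    have e : (b₁' + b₂') + SM'.neg (b₁ + b₂) =
        (b₁' + SM'.neg b₁) + (b₂' + SM'.neg b₂) := by
      rw [SM'.neg_add]; abel
    rwa [e]
  refine ⟨⟨fun b => Or.inl rfl, ?_, ?_⟩, key⟩
  · rintro b b' (rfl | ⟨c, hc⟩)
    · exact Or.inl rfl
    · refine Or.inr ⟨SM.neg c, ?_⟩
      have := SM'.le_neg _ _ hc
      rw [SM'.neg_add, SM'.neg_neg, ← hfneg] at this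
      rwa [add_comm] at this
  · rintro b₁ b₂ b₃ (rfl | ⟨c, hc⟩) (rfl | ⟨c', hc'⟩)
    · exact Or.inl rfl
    · exact Or.inr ⟨c', hc'⟩
    · exact Or.inr ⟨c, hc⟩
    · refine Or.inr ⟨c + c', ?_⟩
      have h := SM'.le_add _ _ _ _ hc hc'
      rw [← hfadd] at h
      have step : SM'.le (b₃ + SM'.neg b₁)
          ((b₂ + SM'.neg b₁) + (b₃ + SM'.neg b₂)) := by
        have h0 := SM'.le_add _ _ _ _ (SM'.le_refl (b₃ + SM'.neg b₁))
          (SM'.zero_le_circ b₂)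
        rw [add_zero] at h0
        have e : (b₃ + SM'.neg b₁) + (b₂ + SM'.neg b₂) =
            (b₂ + SM'.neg b₁) + (b₃ + SM'.neg b₂) := by abel
        rwa [e] at h0
      exact SM'.le_trans _ _ _ step h
end

section
/- Let f : M → M' be a homomorphism of modules with negation carrying surpassing relations. Then the following three subsets of M coincide: {b₀(-)b₁ : b₀, b₁ ∈ M with f(b₀) ≼ f(b₁)}, the null-module kernel {m ∈ M : 0 ≼ f(m)}, and {b₀(-)b₁ : b₀, b₁ ∈ M with 0 ≼ f(b₀)(-)f(b₁)}. -/
/-- For a homomorphism f : M → M', the image of the ≼-precongruence kernel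
under ψ(b₀,b₁) = b₀(-)b₁, the null-module kernel, and the image of the
precongruence kernel under ψ all coincide. -/
theorem kernels_coincide
    {M M' : Type*} [AddCommMonoid M] [AddCommMonoid M']
    (SM : NegModule M) (SM' : NegModule M') (f : M → M')
    (hf : IsNegHom SM SM' f) :
    ({x : M | ∃ b₀ b₁ : M, SM'.le (f b₀) (f b₁) ∧ x = b₀ + SM.neg b₁} =
      {m : M | SM'.le 0 (f m)}) ∧
    ({m : M | SM'.le 0 (f m)} =
      {x : M | ∃ b₀ b₁ : M, SM'.le 0 (f b₀ + SM'.neg (f b₁)) ∧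
        x = b₀ + SM.neg b₁}) := by
  obtain ⟨h0, hneg, hadd, hmono⟩ := hf
  have key : ∀ b₀ b₁ : M, f (b₀ + SM.neg b₁) = f b₀ + SM'.neg (f b₁) := by
    intro b₀ b₁; rw [hadd, hneg]
  constructor
  · ext x
    simp only [Set.mem_setOf_eq]
    constructor
    · rintro ⟨b₀, b₁, hle, rfl⟩
      rw [key]
      exact SM'.le_trans _ _ _ (SM'.zero_le_circ (f b₀))
        (SM'.le_add _ _ _ _ (SM'.le_refl _) (SM'.le_neg _ _ hle))
    · intro hm
      refine ⟨0, SM.neg x, ?_, by rw [SM.neg_neg, zero_add]⟩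
      rw [h0, hneg]
      have := SM'.le_neg _ _ hm
      rwa [SM'.neg_zero] at this
  · ext x
    simp only [Set.mem_setOf_eq]
    constructor
    · intro hm
      refine ⟨x, 0, ?_, by rw [SM.neg_zero, add_zero]⟩
      rw [h0, SM'.neg_zero, add_zero]; exact hm
    · rintro ⟨b₀, b₁, hle, rfl⟩
      rw [key]; exact hle
end

section
/- Let d₂ : M₂ → M₁ and d₁ : M₁ → M₀ be homomorphisms of modules with negation carrying surpassing relations, and assume the ≽-chain condition: every b ∈ M₁ with b ≼ d₂(c) for some c ∈ M₂ satisfies 0 ≼ d₁(b). Let Z = {b ∈ M₁ : 0 ≼ d₁(b)}. Then Z = {b ∈ M₁ : b ≼ d₂(c) for some c ∈ M₂} (≽-exactness) if and only if for all b, b' ∈ Z there exists c ∈ M₂ with b'(-)b ≼ d₂(c) (i.e., the systemic homology H_{sys} at M₁ is trivial). -/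
/-- For a ≽-chain of homomorphisms d₂ : M₂ → M₁, d₁ : M₁ → M₀, ≽-exactness at
M₁ holds if and only if the systemic homology at M₁ is trivial. -/
theorem exact_iff_systemic_homology_trivial
    {M₂ M₁ M₀ : Type*} [AddCommMonoid M₂] [AddCommMonoid M₁] [AddCommMonoid M₀]
    (S₂ : NegModule M₂) (S₁ : NegModule M₁) (S₀ : NegModule M₀)
    (d₂ : M₂ → M₁) (d₁ : M₁ → M₀)
    (hd₂ : IsNegHom S₂ S₁ d₂) (hd₁ : IsNegHom S₁ S₀ d₁)
    (hchain : ∀ (b : M₁) (c : M₂), S₁.le b (d₂ c) → S₀.le 0 (d₁ b)) :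
    ({b : M₁ | S₀.le 0 (d₁ b)} = {b : M₁ | ∃ c : M₂, S₁.le b (d₂ c)}) ↔
      (∀ b b' : M₁, S₀.le 0 (d₁ b) → S₀.le 0 (d₁ b') →
        ∃ c : M₂, S₁.le (b' + S₁.neg b) (d₂ c)) := by
  obtain ⟨h20, h2n, h2a, h2m⟩ := hd₂
  obtain ⟨h10, h1n, h1a, h1m⟩ := hd₁
  constructor
  · intro hZ b b' hb hb'
    have hb1 : b ∈ {b : M₁ | ∃ c : M₂, S₁.le b (d₂ c)} := hZ ▸ hb
    have hb2 : b' ∈ {b : M₁ | ∃ c : M₂, S₁.le b (d₂ c)} := hZ ▸ hb'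
    obtain ⟨c₁, hc₁⟩ := hb1
    obtain ⟨c₂, hc₂⟩ := hb2
    refine ⟨c₂ + S₂.neg c₁, ?_⟩
    rw [h2a, h2n]
    exact S₁.le_add _ _ _ _ hc₂ (S₁.le_neg _ _ hc₁)
  · intro H
    ext b
    simp only [Set.mem_setOf_eq]
    constructor
    · intro hb
      have h0 : S₀.le 0 (d₁ 0) := h10 ▸ S₀.le_refl 0
      obtain ⟨c, hc⟩ := H 0 b h0 hb
      rw [S₁.neg_zero, add_zero] at hc
      exact ⟨c, hc⟩
    · rintro ⟨c, hc⟩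
      exact hchain b c hc
end

section
/- (Semi-Schanuel, homomorphic version.) Let P, M, P', M' be modules with negation carrying surpassing relations. Let f : P → M, f' : P' → M' and μ : M → M' be homomorphisms such that for every y in the respective target there exists x with y ≼ f(x) (respectively y ≼ f'(x), y ≼ μ(x)), and let μ̃ : P → P' be a homomorphism with μ(f(b)) ≼ f'(μ̃(b)) for all b ∈ P. Set K = {b ∈ P : 0 ≼ f(b)} and K' = {c ∈ P' : 0 ≼ f'(c)}. Then: (1) the map g : K' × P → P' given by g(c,b) = μ̃(b)(-)c respects addition and negation componentwise, and for every b' ∈ P' there exists b ∈ P such that μ̃(b)(-)b' ∈ K' and b' ≼ g(μ̃(b)(-)b', b); (2) setting K'' = {(c,b) ∈ K' × P : 0 ≼ g(c,b) and c ≼ μ̃(b)}, the map Φ : K → K'', Φ(b) = (μ̃(b), b), is well defined; the projection Φ'(c,b) = b satisfies Φ'(Φ(b)) = b for all b ∈ K, and Φ(Φ'(c,b)) ≽ (c,b) componentwise for all (c,b) ∈ K'' (so Φ is a ≼-isomorphism onto K''). -/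
/-- Semi-Schanuel, homomorphic version. -/
theorem semi_schanuel
    {P M P' M' : Type*} [AddCommMonoid P] [AddCommMonoid M]
    [AddCommMonoid P'] [AddCommMonoid M']
    (SP : NegModule P) (SM : NegModule M) (SP' : NegModule P')
    (SM' : NegModule M')
    (f : P → M) (f' : P' → M') (μ : M → M') (μt : P → P')
    (hf : IsNegHom SP SM f) (hf' : IsNegHom SP' SM' f')
    (hμ : IsNegHom SM SM' μ) (hμt : IsNegHom SP SP' μt)
    (hf_onto : ∀ y : M, ∃ x : P, SM.le y (f x))
    (hf'_onto : ∀ y : M', ∃ x : P', SM'.le y (f' x))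
    (hμ_onto : ∀ y : M', ∃ x : M, SM'.le y (μ x))
    (hlift : ∀ b : P, SM'.le (μ (f b)) (f' (μt b))) :
    let g : P' × P → P' := fun cb => μt cb.2 + SP'.neg cb.1
    -- (1) g respects addition and negation componentwise ...
    ((∀ c c' : P', ∀ b b' : P, g (c + c', b + b') = g (c, b) + g (c', b')) ∧
     (∀ (c : P') (b : P), g (SP'.neg c, SP.neg b) = SP'.neg (g (c, b))) ∧
     -- ... and g is ≼-onto via elements μ̃(b)(-)b' of K'
     (∀ b' : P', ∃ b : P,
        SM'.le 0 (f' (μt b + SP'.neg b')) ∧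
        SP'.le b' (g (μt b + SP'.neg b', b)))) ∧
    -- (2) Φ(b) = (μ̃(b), b) is a well-defined ≼-isomorphism K → K''
    ((∀ b : P, SM.le 0 (f b) →
        (SM'.le 0 (f' (μt b)) ∧ SP'.le 0 (g (μt b, b)) ∧
          SP'.le (μt b) (μt b))) ∧
     -- Φ' ∘ Φ = id on K
     (∀ b : P, SM.le 0 (f b) → ((μt b, b) : P' × P).2 = b) ∧
     -- Φ ∘ Φ' ≽ id on K'' (componentwise)
     (∀ (c : P') (b : P),
        SM'.le 0 (f' c) → SP'.le 0 (g (c, b)) → SP'.le c (μt b) →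
        SP'.le c (μt b) ∧ SP.le b b)) := by
  obtain ⟨hf0, hfn, hfa, hfm⟩ := hf
  obtain ⟨hf'0, hf'n, hf'a, hf'm⟩ := hf'
  obtain ⟨hμ0, hμn, hμa, hμm⟩ := hμ
  obtain ⟨hμt0, hμtn, hμta, hμtm⟩ := hμt
  intro g
  refine ⟨⟨?_, ?_, ?_⟩, ?_, ?_, ?_⟩
  · intro c c' b b'
    show μt (b + b') + SP'.neg (c + c') = (μt b + SP'.neg c) + (μt b' + SP'.neg c')
    rw [hμta, SP'.neg_add]
    abel
  · intro c b
    show μt (SP.neg b) + SP'.neg (SP'.neg c) = SP'.neg (μt b + SP'.neg c)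
    rw [hμtn, SP'.neg_neg, SP'.neg_add, SP'.neg_neg]
  · intro b'
    obtain ⟨x, hx⟩ := hμ_onto (f' b')
    obtain ⟨b, hb⟩ := hf_onto x
    refine ⟨b, ?_, ?_⟩
    · have h1 : SM'.le (f' b') (f' (μt b)) :=
        SM'.le_trans _ _ _ hx (SM'.le_trans _ _ _ (hμm _ _ hb) (hlift b))
      have h2 := SM'.le_add _ _ _ _ h1 (SM'.le_refl (SM'.neg (f' b')))
      have h3 := SM'.le_trans _ _ _ (SM'.zero_le_circ (f' b')) h2
      rw [hf'a, hf'n]; exact h3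
    · show SP'.le b' (μt b + SP'.neg (μt b + SP'.neg b'))
      rw [SP'.neg_add, SP'.neg_neg]
      have h0 := SP'.zero_le_circ (μt b)
      have := SP'.le_add _ _ _ _ h0 (SP'.le_refl b')
      rw [zero_add] at this
      refine SP'.le_trans _ _ _ this ?_
      have : μt b + SP'.neg (μt b) + b' = μt b + (SP'.neg (μt b) + b') := by abel
      rw [this]
      exact SP'.le_refl _
  · intro b hb
    refine ⟨?_, ?_, SP'.le_refl _⟩
    · have h1 : SM'.le (μ 0) (μ (f b)) := hμm _ _ hb
      rw [hμ0] at h1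
      exact SM'.le_trans _ _ _ h1 (hlift b)
    · exact SP'.zero_le_circ (μt b)
  · intro b _; rfl
  · intro c b _ _ h; exact ⟨h, SP.le_refl b⟩
end

section
/- (Systemic connecting map.) Assume the snake set-up. Call a pair (v,u) ∈ N' × M admissible for x₀ ∈ ker h if x₀ ≼ p(v) and g(v) ≼ l(u). Then: (a) every x₀ ∈ ker h = {x ∈ L' : 0 ≼ h(x)} has an admissible pair; (b) if (v,u) and (v',u') are both admissible for x₀, then there exists y ∈ M' with f(y) ≼ u'(-)u; hence d(x₀) := [u]_f is a well-defined element of the systemic cokernel coker f_sys; (c) if moreover a monoid T acts on all six modules by additive maps commuting with negation and preserving ≼, and q, p, f, g, h, l, r are T-equivariant, then for any a ∈ T an admissible pair (v,u) for x₀ yields the admissible pair (a·v, a·u) for a·x₀, so d is T-equivariant. -/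
/-- A monoid action on a module with negation by additive maps commuting with
the negation and preserving the surpassing relation. -/
def IsTAction {T M : Type*} [Monoid T] [AddCommMonoid M]
    (SM : NegModule M) (sm : T → M → M) : Prop :=
  (∀ x : M, sm 1 x = x) ∧ (∀ (s t : T) (x : M), sm (s * t) x = sm s (sm t x)) ∧
    (∀ (t : T) (a b : M), sm t (a + b) = sm t a + sm t b) ∧
    (∀ t : T, sm t 0 = 0) ∧
    (∀ (t : T) (a : M), sm t (SM.neg a) = SM.neg (sm t a)) ∧
    (∀ (t : T) (a b : M), SM.le a b → SM.le (sm t a) (sm t b))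

/-- The systemic connecting map: (a) every element of ker h admits an
admissible pair; (b) any two admissible pairs give the same class in the
systemic cokernel of f; (c) admissible pairs are preserved by a T-action,
so the connecting map is T-equivariant. -/
theorem systemic_connecting_map
    {M' N' L' M N L T : Type*}
    [AddCommMonoid M'] [AddCommMonoid N'] [AddCommMonoid L']
    [AddCommMonoid M] [AddCommMonoid N] [AddCommMonoid L] [Monoid T]
    (SM' : NegModule M') (SN' : NegModule N') (SL' : NegModule L')
    (SM : NegModule M) (SN : NegModule N) (SL : NegModule L)
    (q : M' → N') (p : N' → L') (f : M' → M) (g : N' → N) (h : L' → L)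
    (l : M → N) (r : N → L)
    (hq : IsPrecMorphism SM' SN' q) (hp : IsNegHom SN' SL' p)
    (hf : IsPrecMorphism SM' SM f) (hg : IsNegHom SN' SN g)
    (hh : IsPrecMorphism SL' SL h) (hl : IsNegHom SM SN l)
    (hr : IsPrecMorphism SN SL r)
    (hl_monic : ∀ b₀ b₁ : M, SN.le (l b₀) (l b₁) → SM.le b₀ b₁)
    (hcomm₁ : ∀ x : M', g (q x) = l (f x))
    (hcomm₂ : ∀ x : N', h (p x) = r (g x))
    (hp_onto : ∀ x : L', ∃ v : N', SL'.le x (p v))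
    (htop : {b : N' | SL'.le 0 (p b)} = {b : N' | ∃ c : M', SN'.le (q c) b})
    (hbot : {b : N | SL.le 0 (r b)} = {b : N | ∃ c : M, SN.le b (l c)})
    (smM' : T → M' → M') (smN' : T → N' → N') (smL' : T → L' → L')
    (smM : T → M → M) (smN : T → N → N) (smL : T → L → L)
    (hactM' : IsTAction SM' smM') (hactN' : IsTAction SN' smN')
    (hactL' : IsTAction SL' smL') (hactM : IsTAction SM smM)
    (hactN : IsTAction SN smN) (hactL : IsTAction SL smL)
    (heq_q : ∀ (t : T) (x : M'), q (smM' t x) = smN' t (q x))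
    (heq_p : ∀ (t : T) (x : N'), p (smN' t x) = smL' t (p x))
    (heq_f : ∀ (t : T) (x : M'), f (smM' t x) = smM t (f x))
    (heq_g : ∀ (t : T) (x : N'), g (smN' t x) = smN t (g x))
    (heq_h : ∀ (t : T) (x : L'), h (smL' t x) = smL t (h x))
    (heq_l : ∀ (t : T) (x : M), l (smM t x) = smN t (l x))
    (heq_r : ∀ (t : T) (x : N), r (smN t x) = smL t (r x)) :
    -- (a) every x₀ ∈ ker h has an admissible pair
    (∀ x₀ : L', SL.le 0 (h x₀) →
      ∃ (v : N') (u : M), SL'.le x₀ (p v) ∧ SN.le (g v) (l u)) ∧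
    -- (b) any two admissible pairs for x₀ give the same class in coker f_sys
    (∀ (x₀ : L') (v : N') (u : M) (v' : N') (u' : M), SL.le 0 (h x₀) →
      SL'.le x₀ (p v) → SN.le (g v) (l u) →
      SL'.le x₀ (p v') → SN.le (g v') (l u') →
      ∃ y : M', SM.le (f y) (u' + SM.neg u)) ∧
    -- (c) the T-action carries admissible pairs to admissible pairs
    (∀ (a : T) (x₀ : L') (v : N') (u : M), SL.le 0 (h x₀) →
      SL'.le x₀ (p v) → SN.le (g v) (l u) →
      SL'.le (smL' a x₀) (p (smN' a v)) ∧
        SN.le (g (smN' a v)) (l (smM a u))) := by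
  obtain ⟨hp0, hpneg, hpadd, hpmono⟩ := hp
  obtain ⟨hg0, hgneg, hgadd, hgmono⟩ := hg
  obtain ⟨hl0, hlneg, hladd, hlmono⟩ := hl
  obtain ⟨hh0, hhneg, hhadd, hhmono⟩ := hh
  refine ⟨?_, ?_, ?_⟩
  · intro x₀ hx₀
    obtain ⟨v, hv⟩ := hp_onto x₀
    have h1 : SL.le 0 (r (g v)) := by
      rw [← hcomm₂]
      exact SL.le_trans _ _ _ hx₀ (hhmono _ _ hv)
    have h2 : g v ∈ {b : N | SL.le 0 (r b)} := h1
    rw [hbot] at h2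
    obtain ⟨u, hu⟩ := h2
    exact ⟨v, u, hv, hu⟩
  · intro x₀ v u v' u' _ hv hu hv' hu'
    have h1 : SL'.le 0 (p (v' + SN'.neg v)) := by
      rw [hpadd, hpneg]
      exact SL'.le_trans _ _ _ (SL'.zero_le_circ x₀)
        (SL'.le_add _ _ _ _ hv' (SL'.le_neg _ _ hv))
    have h2 : (v' + SN'.neg v) ∈ {b : N' | ∃ c : M', SN'.le (q c) b} := by
      rw [← htop]; exact h1
    obtain ⟨c, hc⟩ := h2
    refine ⟨c, hl_monic _ _ ?_⟩
    have h3 : SN.le (g (q c)) (g (v' + SN'.neg v)) := hgmono _ _ hc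
    rw [hcomm₁, hgadd, hgneg] at h3
    rw [hladd, hlneg]
    exact SN.le_trans _ _ _ h3 (SN.le_add _ _ _ _ hu' (SN.le_neg _ _ hu))
  · intro a x₀ v u _ hv hu
    constructor
    · rw [heq_p]
      exact hactL'.2.2.2.2.2 a _ _ hv
    · rw [heq_g, heq_l]
      exact hactN.2.2.2.2.2 a _ _ hu
end

section
/- Let f : X → Y be a homomorphism of ∘-idempotent modules with negation. Define the relation Φ on Y by: y Φ y' if and only if g(y) = g(y') for every ∘-idempotent module with negation Z and every homomorphism g : Y → Z such that g(f(x)) ∈ Z° for all x ∈ X. Then: (1) Φ is an equivalence relation compatible with addition and with the negation map, so the quotient Y/Φ is a module with negation, and Y/Φ is ∘-idempotent; (2) [f(c)] = [f(c)°] in Y/Φ for every c ∈ X; (3) for every ∘-idempotent module with negation Z and every homomorphism h : Y → Z with h(f(x)) ∈ Z° for all x ∈ X, there is a unique homomorphism h̃ : Y/Φ → Z with h̃ ∘ π = h, where π : Y → Y/Φ is the projection. (Thus π is an N-cokernel of f in the category of ∘-idempotent modules with negation, with null morphisms those landing in quasi-zeros.) -/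
universe u u' v

/-- A negation map on an additive commutative monoid: an additive monoid
automorphism of order ≤ 2. -/
structure Negation (M : Type*) [AddCommMonoid M] where
  neg : M → M
  neg_add : ∀ a b : M, neg (a + b) = neg a + neg b
  neg_zero : neg 0 = 0
  neg_neg : ∀ a : M, neg (neg a) = a

/-- ∘-idempotence: (b°)° = b° for every b, where b° = b + (-)b. -/
def CircIdem {M : Type*} [AddCommMonoid M] (nM : Negation M) : Prop :=
  ∀ b : M, (b + nM.neg b) + nM.neg (b + nM.neg b) = b + nM.neg b

/-- A homomorphism of modules with negation. -/
def IsNegAddHom {X Y : Type*} [AddCommMonoid X] [AddCommMonoid Y]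
    (nX : Negation X) (nY : Negation Y) (f : X → Y) : Prop :=
  f 0 = 0 ∧ (∀ a b : X, f (a + b) = f a + f b) ∧
    (∀ a : X, f (nX.neg a) = nY.neg (f a))

/-- The N-cokernel of a homomorphism of ∘-idempotent modules with negation:
the relation Φ is a congruence, the quotient is ∘-idempotent, [f(c)] = [f(c)°],
and the projection Y → Y/Φ satisfies the universal property of the N-cokernel
(null morphisms are those landing in quasi-zeros). -/
theorem circ_idempotent_cokernel
    {X : Type u} {Y : Type u'} [AddCommMonoid X] [AddCommMonoid Y]
    (nX : Negation X) (nY : Negation Y)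
    (hX : CircIdem nX) (hY : CircIdem nY)
    (f : X → Y) (hf : IsNegAddHom nX nY f) :
    let Φ : Y → Y → Prop := fun y y' =>
      ∀ (Z : Type v) [AddCommMonoid Z], ∀ (nZ : Negation Z), CircIdem nZ →
        ∀ g : Y → Z, IsNegAddHom nY nZ g →
          (∀ x : X, ∃ z : Z, g (f x) = z + nZ.neg z) → g y = g y'
    -- (1) Φ is a congruence and the quotient is a ∘-idempotent module
    -- with negation
    Equivalence Φ ∧
    (∀ y₁ y₁' y₂ y₂' : Y, Φ y₁ y₁' → Φ y₂ y₂' → Φ (y₁ + y₂) (y₁' + y₂')) ∧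
    (∀ y y' : Y, Φ y y' → Φ (nY.neg y) (nY.neg y')) ∧
    (∀ y : Y, Φ ((y + nY.neg y) + nY.neg (y + nY.neg y)) (y + nY.neg y)) ∧
    -- (2) [f(c)] = [f(c)°] in Y/Φ
    (∀ c : X, Φ (f c) (f c + nY.neg (f c))) ∧
    -- (3) the universal property of the N-cokernel
    (∀ (Z : Type v) [AddCommMonoid Z], ∀ (nZ : Negation Z), CircIdem nZ →
      ∀ h : Y → Z, IsNegAddHom nY nZ h →
        (∀ x : X, ∃ z : Z, h (f x) = z + nZ.neg z) →
        ∃! htilde : Quot Φ → Z, ∀ y : Y, htilde (Quot.mk Φ y) = h y) := by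
  intro Φ
  refine ⟨⟨fun y => ?_, fun hab => ?_, fun hab hbc => ?_⟩, ?_, ?_, ?_, ?_, ?_⟩
  · intro Z _ nZ _ g _ _; rfl
  · intro Z _ nZ hZ g hg hn; exact (hab Z nZ hZ g hg hn).symm
  · intro Z _ nZ hZ g hg hn; exact (hab Z nZ hZ g hg hn).trans (hbc Z nZ hZ g hg hn)
  · intro y₁ y₁' y₂ y₂' h1 h2 Z _ nZ hZ g hg hn
    rw [hg.2.1, hg.2.1, h1 Z nZ hZ g hg hn, h2 Z nZ hZ g hg hn]
  · intro y y' h1 Z _ nZ hZ g hg hn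
    rw [hg.2.2, hg.2.2, h1 Z nZ hZ g hg hn]
  · intro y Z _ nZ hZ g hg hn
    rw [hg.2.1, hg.2.2, hg.2.1, hg.2.2]
    exact hZ (g y)
  · intro c Z _ nZ hZ g hg hn
    obtain ⟨z, hz⟩ := hn c
    rw [hg.2.1, hg.2.2, hz]
    have := hZ z
    rw [nZ.neg_add, nZ.neg_neg] at this
    rw [nZ.neg_add, nZ.neg_neg]
    exact this.symm
  · intro Z _ nZ hZ h hh hn
    refine ⟨Quot.lift h (fun a b hab => hab Z nZ hZ h hh hn), fun y => rfl, ?_⟩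
    intro g hg
    funext q
    induction q using Quot.ind with
    | _ y => exact hg y
end
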